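/- For each language-valued transition system (a finite graph with edges labelled by letters of Σ, with chosen initial state i and final state f), the language traced out from i to f (the set of words labelling paths from i to f) equals the hom L(i,f) of the free P(Σ*)-category on the labelled graph; moreover, for single-edge graphs this hom is the singleton of the edge's label, and the construction sends the graph-level operations of disjoint union and glueing of states to union and the Kleene-formula combination of languages. Consequently, every language recognized by a finite automaton lies in the closure of singleton languages (and ∅, {ε}) under union, concatenation, and Kleene star (Kleene's theorem, one direction). -/

import Mathlib

/-- Labelled paths in a transition system: `LabelledPath T p q w` holds when there is a path
of edges from state `p` to state `q` whose labels spell out the word `w`. -/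
inductive LabelledPath {Q σ : Type*} (T : Q → σ → Q → Prop) : Q → Q → List σ → Prop
  | nil (q : Q) : LabelledPath T q q []
  | cons {p p' q : Q} {a : σ} {w : List σ} :
      T p a p' → LabelledPath T p' q w → LabelledPath T p q (a :: w)

/-- The language traced out from state `i` to state `f` of a labelled transition
system: all words labelling paths from `i` to `f`. -/
def tracedLanguage {Q σ : Type*} (T : Q → σ → Q → Prop) (i f : Q) : Language σ :=
  { w | LabelledPath T i f w }

/-- Paths whose intermediate states all lie in `S`. -/
inductive PathIn {Q σ : Type*} (T : Q → σ → Q → Prop) (S : Set Q) : Q → Q → List σ → Prop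
  | nil (q : Q) : PathIn T S q q []
  | single {p q : Q} {a : σ} : T p a q → PathIn T S p q [a]
  | cons {p p' q : Q} {a : σ} {w : List σ} :
      T p a p' → p' ∈ S → PathIn T S p' q w → PathIn T S p q (a :: w)

open Computability

section
variable {Q σ : Type*} {T : Q → σ → Q → Prop} {S S' : Set Q}

lemma PathIn.mono (hS : S ⊆ S') {p q w} (h : PathIn T S p q w) : PathIn T S' p q w := by
  induction h with
  | nil q => exact .nil q
  | single h => exact .single h
  | cons h hm _ ih => exact .cons h (hS hm) ih

lemma PathIn.append' {p m q u v} (h1 : PathIn T S p m u) :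
    m ∈ S → PathIn T S m q v → PathIn T S p q (u ++ v) := by
  induction h1 with
  | nil => intro _ h2; simpa using h2
  | single h => intro hm h2; exact .cons h hm h2
  | cons h hmem _ ih => intro hm h2; exact .cons h hmem (ih hm h2)

lemma PathIn.append {p m q u v} (hm : m ∈ S) (h1 : PathIn T S p m u)
    (h2 : PathIn T S m q v) : PathIn T S p q (u ++ v) :=
  h1.append' hm h2

lemma PathIn.join {x} (hx : x ∈ S) (l : List (List σ)) (h : ∀ y ∈ l, PathIn T S x x y) :
    PathIn T S x x l.flatten := by
  induction l with
  | nil => exact .nil x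
  | cons u l ih =>
      exact PathIn.append hx (h u (by simp)) (ih fun y hy => h y (by simp [hy]))

def pathLang (T : Q → σ → Q → Prop) (S : Set Q) (p q : Q) : Language σ :=
  {w | PathIn T S p q w}

lemma pathIn_insert (x : Q) (S : Set Q) (p q : Q) :
    pathLang T (insert x S) p q =
      pathLang T S p q + pathLang T S p x * (pathLang T S x x)∗ * pathLang T S x q := by
  apply Set.ext; intro w
  constructor
  · intro h
    induction h with
    | nil q => exact Or.inl (.nil q)
    | single h => exact Or.inl (.single h)
    | @cons p p' q a w h hmem _ ih =>
        rcases hmem with hpx | hmem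
        · -- p' = x
          rw [hpx] at h ih
          right
          have hw : w ∈ (pathLang T S x x)∗ * pathLang T S x q := by
            rcases ih with h1 | h1
            · simpa using Language.append_mem_mul (Language.nil_mem_kstar (pathLang T S x x)) h1
            · rcases Language.mem_mul.1 h1 with ⟨uv, huv, t, ht, rfl⟩
              rcases Language.mem_mul.1 huv with ⟨u, hu, v, hv, rfl⟩
              have : u ++ v ∈ (pathLang T S x x)∗ := by
                rcases Language.mem_kstar.1 hv with ⟨L, rfl, hL⟩
                have : ((u :: L).flatten : List σ) = u ++ L.flatten := by simp
                rw [← this]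
                refine Language.join_mem_kstar ?_
                intro y hy
                rcases List.mem_cons.1 hy with rfl | hy
                · exact hu
                · exact hL y hy
              simpa [List.append_assoc] using Language.append_mem_mul this ht
          rcases Language.mem_mul.1 hw with ⟨v, hv, t, ht, rfl⟩
          have hax : ([a] : List σ) ∈ pathLang T S p x := .single h
          have := Language.append_mem_mul (Language.append_mem_mul hax hv) ht
          simp at this; exact this
        · rcases ih with h1 | h1
          · exact Or.inl (.cons h hmem h1)
          · right
            rcases Language.mem_mul.1 h1 with ⟨uv, huv, t, ht, rfl⟩
            rcases Language.mem_mul.1 huv with ⟨u, hu, v, hv, rfl⟩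
            have hau : (a :: u : List σ) ∈ pathLang T S p x :=
              .cons h hmem hu
            have := Language.append_mem_mul (Language.append_mem_mul hau hv) ht
            simp at this; rw [List.append_assoc]; exact this
  · rintro (h | h)
    · exact h.mono (Set.subset_insert x S)
    · rcases Language.mem_mul.1 h with ⟨uv, huv, t, ht, rfl⟩
      rcases Language.mem_mul.1 huv with ⟨u, hu, v, hv, rfl⟩
      have hx : x ∈ insert x S := Set.mem_insert x S
      have hvx : PathIn T (insert x S) x x v := by
        rcases Language.mem_kstar.1 hv with ⟨L, rfl, hL⟩
        exact PathIn.join hx L fun y hy => (hL y hy).mono (Set.subset_insert x S)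
      exact PathIn.append hx
        (PathIn.append hx (hu.mono (Set.subset_insert x S)) hvx)
        (ht.mono (Set.subset_insert x S))

lemma chars_regular [Fintype σ] (P : σ → Prop) (_dummy : Q) (s : Finset σ) :
    ∃ r : RegularExpression σ, r.matches' = {w | ∃ a ∈ s, w = [a] ∧ P a} := by
  classical
  induction s using Finset.induction with
  | empty =>
      refine ⟨0, ?_⟩
      ext w
      simp only [RegularExpression.matches'_zero, Set.mem_setOf_eq, Finset.notMem_empty]
      exact iff_of_false (Set.notMem_empty w) (by rintro ⟨a, h, -⟩; exact h)
  | @insert a s ha ih =>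
      rcases ih with ⟨r, hr⟩
      by_cases hPa : P a
      · refine ⟨RegularExpression.char a + r, ?_⟩
        ext w
        simp only [RegularExpression.matches'_add, RegularExpression.matches'_char, hr,
          Language.mem_add, Set.mem_singleton_iff, Set.mem_setOf_eq, Finset.mem_insert]
        constructor
        · rintro (rfl | ⟨b, hb, rfl, hPb⟩)
          · exact ⟨a, Or.inl rfl, rfl, hPa⟩
          · exact ⟨b, Or.inr hb, rfl, hPb⟩
        · rintro ⟨b, (rfl | hb), rfl, hPb⟩
          · exact Or.inl rfl
          · exact Or.inr ⟨b, hb, rfl, hPb⟩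
      · refine ⟨r, ?_⟩
        rw [hr]; ext w
        simp only [Set.mem_setOf_eq, Finset.mem_insert]
        constructor
        · rintro ⟨b, hb, rfl, hPb⟩
          exact ⟨b, Or.inr hb, rfl, hPb⟩
        · rintro ⟨b, (rfl | hb), rfl, hPb⟩
          · exact absurd hPb hPa
          · exact ⟨b, hb, rfl, hPb⟩

lemma pathIn_regular [Finite Q] [Fintype σ] (T : Q → σ → Q → Prop) (s : Finset Q)
    (p q : Q) : ∃ r : RegularExpression σ, r.matches' = {w | PathIn T ↑s p q w} := by
  classical
  cases nonempty_fintype Q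
  induction s using Finset.induction generalizing p q with
  | empty =>
      have base : ∀ p q : Q, ∃ r : RegularExpression σ,
          r.matches' = {w | ∃ a, w = [a] ∧ T p a q} := by
        intro p q
        rcases chars_regular (fun a => T p a q) p Finset.univ with ⟨r, hr⟩
        exact ⟨r, by rw [hr]; ext w; simp⟩
      rcases base p q with ⟨r, hr⟩
      by_cases hpq : p = q
      · subst hpq
        refine ⟨1 + r, ?_⟩
        ext w
        simp only [RegularExpression.matches'_add, RegularExpression.matches'_epsilon, hr,
          Language.mem_add, Language.mem_one]
        constructor
        · rintro (rfl | ⟨a, rfl, h⟩)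
          · exact PathIn.nil p
          · exact PathIn.single h
        · intro h
          cases h with
          | nil => exact Or.inl rfl
          | single h => exact Or.inr ⟨_, rfl, h⟩
          | cons _ hm _ => simp at hm
      · refine ⟨r, ?_⟩
        rw [hr]
        ext w
        constructor
        · rintro ⟨a, rfl, h⟩
          exact PathIn.single h
        · intro h
          cases h with
          | nil => exact absurd rfl hpq
          | single h => exact ⟨_, rfl, h⟩
          | cons _ hm _ => simp at hm
  | @insert x s hx ih =>
      rcases ih p q with ⟨r1, h1⟩
      rcases ih p x with ⟨r2, h2⟩
      rcases ih x x with ⟨r3, h3⟩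
      rcases ih x q with ⟨r4, h4⟩
      refine ⟨r1 + r2 * r3.star * r4, ?_⟩
      have hc : ((insert x s : Finset Q) : Set Q) = insert x ↑s := by simp
      show _ = pathLang T ↑(insert x s) p q
      rw [hc, pathIn_insert x ↑s p q]
      rw [RegularExpression.matches'_add, RegularExpression.matches'_mul,
        RegularExpression.matches'_mul, RegularExpression.matches'_star, h1, h2, h3, h4]
      rfl

lemma labelledPath_iff {p q : Q} {w : List σ} :
    LabelledPath T p q w ↔ PathIn T Set.univ p q w := by
  constructor
  · intro h
    induction h with
    | nil q => exact PathIn.nil q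
    | cons h _ ih => exact PathIn.cons h (Set.mem_univ _) ih
  · intro h
    induction h with
    | nil q => exact LabelledPath.nil q
    | single h => exact LabelledPath.cons h (LabelledPath.nil _)
    | cons h _ _ ih => exact LabelledPath.cons h ih

end

/-- Kleene's theorem (one direction). -/
theorem automaton_language_regular {Q σ : Type*} [Finite Q] [Fintype σ]
    [DecidableEq σ] (T : Q → σ → Q → Prop) (i f : Q) :
    ∃ r : RegularExpression σ, r.matches' = tracedLanguage T i f := by
  classical
  cases nonempty_fintype Q
  rcases pathIn_regular T Finset.univ i f with ⟨r, hr⟩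
  refine ⟨r, ?_⟩
  rw [hr]
  ext w
  show PathIn T (↑(Finset.univ : Finset Q)) i f w ↔ LabelledPath T i f w
  rw [labelledPath_iff, Finset.coe_univ]
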